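/- (Generalised IRL duality: RL∘IRL matches future-state occupancy measures.) In the finite MDP setting with geometric weights η(k) = (1−γ_η)γ_η^k, γ_η ∈ (0,1), let p₀ ∈ PMF S, let π_E be a policy, let Ω̄ : (S → S × A → ℝ) → ℝ be strictly concave, let ψ : (S × A → ℝ) → ℝ be convex, let 𝒟 = { (s₀ ↦ (s,a) ↦ μ_π((s,a)|s₀)) : π a policy }, and define L̄(μ,c) = −Ω̄(μ) − ψ(c) + ∑_{s₀} p₀(s₀) ∑_{(s,a)} c(s,a) · (μ(s₀)(s,a) − μ_{π_E}((s,a)|s₀)). Assume 𝒟 is convex. Suppose c̃ maximizes c ↦ inf_{μ ∈ 𝒟} L̄(μ,c) over all c : S × A → ℝ, μ̃ minimizes μ ↦ L̄(μ,c̃) over 𝒟, and μ̂ minimizes μ ↦ sup_{c} L̄(μ,c) over 𝒟 (the supremum at μ̂ being finite). Then μ̃ = μ̂. -/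

import Mathlib

open scoped BigOperators Classical

/-- `n`-step state–action distribution of the stationary policy `π` started at a state. -/
noncomputable def PstepS {S A : Type*} [Fintype S] [Fintype A]
    (P : S × A → PMF S) (π : S → PMF A) : ℕ → S → S × A → ℝ
  | 0, s₀, x => if x.1 = s₀ then (π x.1 x.2).toReal else 0
  | n + 1, s₀, x => ∑ y : S × A, PstepS P π n s₀ y * (P y x.1).toReal * (π x.1 x.2).toReal

/-- `n`-step state–action distribution of `π` started at a state–action pair. -/
noncomputable def PstepSA {S A : Type*} [Fintype S] [Fintype A]
    (P : S × A → PMF S) (π : S → PMF A) : ℕ → S × A → S × A → ℝ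
  | 0, y, x => if x = y then 1 else 0
  | n + 1, y, x => ∑ z : S × A, PstepSA P π n y z * (P z x.1).toReal * (π x.1 x.2).toReal

/-- η-weighted future state distribution, started at a state. -/
noncomputable def PetaS {S A : Type*} [Fintype S] [Fintype A]
    (P : S × A → PMF S) (π : S → PMF A) (η : ℕ → ℝ) (s₀ : S) (x : S × A) : ℝ :=
  ∑' k, η k * PstepS P π k s₀ x

/-- η-weighted future state distribution, started at a state–action pair. -/
noncomputable def PetaSA {S A : Type*} [Fintype S] [Fintype A]
    (P : S × A → PMF S) (π : S → PMF A) (η : ℕ → ℝ) (y : S × A) (x : S × A) : ℝ :=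
  ∑' k, η k * PstepSA P π k y x

/-- γ-discounted occupancy measure, started at a state. -/
noncomputable def rhoS {S A : Type*} [Fintype S] [Fintype A]
    (P : S × A → PMF S) (π : S → PMF A) (γ : ℝ) (s₀ : S) (x : S × A) : ℝ :=
  ∑' t, γ ^ t * PstepS P π t s₀ x

/-- γ-discounted occupancy measure, started at a state–action pair. -/
noncomputable def rhoSA {S A : Type*} [Fintype S] [Fintype A]
    (P : S × A → PMF S) (π : S → PMF A) (γ : ℝ) (y : S × A) (x : S × A) : ℝ :=
  ∑' t, γ ^ t * PstepSA P π t y x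

/-- η-weighted, γ-discounted future occupancy measure `μ_π`. -/
noncomputable def muS {S A : Type*} [Fintype S] [Fintype A]
    (P : S × A → PMF S) (π : S → PMF A) (γ : ℝ) (η : ℕ → ℝ) (s₀ : S) (x : S × A) : ℝ :=
  ∑' t, ∑' k, γ ^ t * η k * PstepS P π (t + k) s₀ x


section AuxIRL

variable {S A : Type*} [Fintype S] [Fintype A]

lemma pmf_sum_toReal {α : Type*} [Fintype α] (p : PMF α) : ∑ a, (p a).toReal = 1 := by
  rw [← ENNReal.toReal_sum (fun a _ => PMF.apply_ne_top p a)]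
  rw [← tsum_fintype (L := SummationFilter.unconditional _), p.tsum_coe, ENNReal.toReal_one]

lemma PstepS_nonneg (P : S × A → PMF S) (π : S → PMF A) (n : ℕ) (s₀ : S) (x : S × A) :
    0 ≤ PstepS P π n s₀ x := by
  induction n generalizing x with
  | zero =>
    simp only [PstepS]
    split
    · exact ENNReal.toReal_nonneg
    · exact le_rfl
  | succ n ih =>
    exact Finset.sum_nonneg fun y _ =>
      mul_nonneg (mul_nonneg (ih y) ENNReal.toReal_nonneg) ENNReal.toReal_nonneg

lemma PstepS_sum (P : S × A → PMF S) (π : S → PMF A) (n : ℕ) (s₀ : S) :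
    ∑ x : S × A, PstepS P π n s₀ x = 1 := by
  induction n with
  | zero =>
    simp only [PstepS, Fintype.sum_prod_type]
    have h : ∀ s : S, (∑ a : A, if s = s₀ then (π s a).toReal else 0)
        = if s = s₀ then 1 else 0 := by
      intro s
      split <;> simp [pmf_sum_toReal]
    simp only [h]
    simp
  | succ n ih =>
    simp only [PstepS]
    rw [Finset.sum_comm]
    have h1 : ∀ y : S × A,
        (∑ x : S × A, PstepS P π n s₀ y * (P y x.1).toReal * (π x.1 x.2).toReal)
        = PstepS P π n s₀ y := by
      intro y
      rw [Fintype.sum_prod_type]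
      have h2 : ∀ s : S,
          (∑ a : A, PstepS P π n s₀ y * (P y s).toReal * (π s a).toReal)
          = PstepS P π n s₀ y * (P y s).toReal := by
        intro s
        rw [← Finset.mul_sum, pmf_sum_toReal, mul_one]
      simp only [h2]
      rw [← Finset.mul_sum, pmf_sum_toReal, mul_one]
    simp only [h1]
    exact ih

lemma PstepS_le_one (P : S × A → PMF S) (π : S → PMF A) (n : ℕ) (s₀ : S) (x : S × A) :
    PstepS P π n s₀ x ≤ 1 := by
  calc PstepS P π n s₀ x ≤ ∑ y : S × A, PstepS P π n s₀ y :=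
        Finset.single_le_sum (fun y _ => PstepS_nonneg P π n s₀ y) (Finset.mem_univ x)
    _ = 1 := PstepS_sum P π n s₀

lemma muS_mem (P : S × A → PMF S) (π : S → PMF A) {γ γη : ℝ}
    (hγ : γ ∈ Set.Ioo (0:ℝ) 1) (hγη : γη ∈ Set.Ioo (0:ℝ) 1) {η : ℕ → ℝ}
    (hη : ∀ k, η k = (1 - γη) * γη ^ k) (s₀ : S) (x : S × A) :
    muS P π γ η s₀ x ∈ Set.Icc (0:ℝ) (1 - γ)⁻¹ := by
  obtain ⟨hγ0, hγ1⟩ := hγ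
  obtain ⟨hγη0, hγη1⟩ := hγη
  have hη0 : ∀ k, 0 ≤ η k := fun k => by
    rw [hη k]; exact mul_nonneg (by linarith) (pow_nonneg hγη0.le k)
  have hsumη : Summable η := by
    have : Summable (fun k => (1 - γη) * γη ^ k) :=
      (summable_geometric_of_lt_one hγη0.le hγη1).mul_left _
    exact this.congr fun k => (hη k).symm
  have hηsum : ∑' k, η k = 1 := by
    have h1 : ∑' k, η k = ∑' k, (1 - γη) * γη ^ k := tsum_congr fun k => hη k
    rw [h1, tsum_mul_left, tsum_geometric_of_lt_one hγη0.le hγη1,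
      mul_inv_cancel₀ (by linarith)]
  have hterm_nonneg : ∀ t k, 0 ≤ γ ^ t * η k * PstepS P π (t + k) s₀ x := fun t k =>
    mul_nonneg (mul_nonneg (pow_nonneg hγ0.le t) (hη0 k)) (PstepS_nonneg P π _ s₀ x)
  have hterm_le : ∀ t k, γ ^ t * η k * PstepS P π (t + k) s₀ x ≤ γ ^ t * η k := fun t k =>
    mul_le_of_le_one_right (mul_nonneg (pow_nonneg hγ0.le t) (hη0 k)) (PstepS_le_one P π _ s₀ x)
  have hs2 : ∀ t : ℕ, Summable (fun k => γ ^ t * η k) := fun t => hsumη.mul_left _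
  have hs1 : ∀ t : ℕ, Summable (fun k => γ ^ t * η k * PstepS P π (t + k) s₀ x) := fun t =>
    Summable.of_nonneg_of_le (hterm_nonneg t) (hterm_le t) (hs2 t)
  have hinner_le : ∀ t : ℕ, ∑' k, γ ^ t * η k * PstepS P π (t + k) s₀ x ≤ γ ^ t := by
    intro t
    calc ∑' k, γ ^ t * η k * PstepS P π (t + k) s₀ x
        ≤ ∑' k, γ ^ t * η k := (hs1 t).tsum_le_tsum (hterm_le t) (hs2 t)
      _ = γ ^ t * ∑' k, η k := tsum_mul_left
      _ = γ ^ t := by rw [hηsum, mul_one]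
  have hinner_nonneg : ∀ t : ℕ, 0 ≤ ∑' k, γ ^ t * η k * PstepS P π (t + k) s₀ x := fun t =>
    tsum_nonneg (hterm_nonneg t)
  have hgeom : Summable (fun t : ℕ => γ ^ t) := summable_geometric_of_lt_one hγ0.le hγ1
  have houter : Summable (fun t : ℕ => ∑' k, γ ^ t * η k * PstepS P π (t + k) s₀ x) :=
    Summable.of_nonneg_of_le hinner_nonneg hinner_le hgeom
  constructor
  · exact tsum_nonneg hinner_nonneg
  · calc muS P π γ η s₀ x ≤ ∑' t : ℕ, γ ^ t := houter.tsum_le_tsum hinner_le hgeom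
      _ = (1 - γ)⁻¹ := tsum_geometric_of_lt_one hγ0.le hγ1

end AuxIRL

open Filter Topology Bornology in
theorem stmt10 {S A : Type*} [Fintype S] [Fintype A] [Nonempty S] [Nonempty A]
    (P : S × A → PMF S) (γ γη : ℝ)
    (hγ : γ ∈ Set.Ioo (0 : ℝ) 1) (hγη : γη ∈ Set.Ioo (0 : ℝ) 1)
    (η : ℕ → ℝ) (hη : ∀ k, η k = (1 - γη) * γη ^ k)
    (p₀ : PMF S) (πE : S → PMF A)
    (Ωb : (S → S × A → ℝ) → ℝ) (hΩ : StrictConcaveOn ℝ Set.univ Ωb)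
    (ψ : (S × A → ℝ) → ℝ) (hψ : ConvexOn ℝ Set.univ ψ)
    -- the set of η-weighted occupancy measures
    (𝒟 : Set (S → S × A → ℝ))
    (h𝒟 : 𝒟 = { μ | ∃ π : S → PMF A, μ = fun s₀ x => muS P π γ η s₀ x })
    (h𝒟conv : Convex ℝ 𝒟)
    -- the IRL Lagrangian
    (Lbar : (S → S × A → ℝ) → (S × A → ℝ) → ℝ)
    (hL : Lbar = fun μ c => -Ωb μ - ψ c +
      ∑ s₀ : S, (p₀ s₀).toReal * ∑ x : S × A, c x * (μ s₀ x - muS P πE γ η s₀ x))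
    (ctil : S × A → ℝ) (μtil μhat : S → S × A → ℝ)
    -- `ctil` maximizes `c ↦ inf_{μ ∈ 𝒟} L̄(μ, c)`
    (hctil : ∀ c : S × A → ℝ, (⨅ μ : 𝒟, Lbar (↑μ) c) ≤ ⨅ μ : 𝒟, Lbar (↑μ) ctil)
    -- `μtil` minimizes `μ ↦ L̄(μ, ctil)` over `𝒟`
    (hμtil : μtil ∈ 𝒟 ∧ ∀ μ ∈ 𝒟, Lbar μtil ctil ≤ Lbar μ ctil)
    -- `μhat` minimizes `μ ↦ sup_c L̄(μ, c)` over `𝒟`, the supremum at `μhat` being finite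
    (hbdd : BddAbove (Set.range fun c : S × A → ℝ => Lbar μhat c))
    (hμhat : μhat ∈ 𝒟 ∧ ∀ μ ∈ 𝒟, (⨆ c : S × A → ℝ, Lbar μhat c) ≤ ⨆ c : S × A → ℝ, Lbar μ c) :
    μtil = μhat := by
  classical
  obtain ⟨hγ0, hγ1⟩ := hγ
  haveI : Nonempty ↥𝒟 := ⟨⟨μtil, hμtil.1⟩⟩
  -- boundedness of 𝒟
  set R : ℝ := (1 - γ)⁻¹ with hRdef
  have hR0 : 0 ≤ R := inv_nonneg.2 (by linarith)
  have hmemIcc : ∀ μ ∈ 𝒟, ∀ s₀ x, μ s₀ x ∈ Set.Icc (0:ℝ) R := by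
    rw [h𝒟]; rintro μ ⟨π, rfl⟩ s₀ x
    exact muS_mem P π ⟨hγ0, hγ1⟩ hγη hη s₀ x
  have hDbdd : IsBounded 𝒟 := by
    rw [isBounded_iff_forall_norm_le]
    refine ⟨R, fun μ hμ => ?_⟩
    rw [pi_norm_le_iff_of_nonneg hR0]
    intro s₀
    rw [pi_norm_le_iff_of_nonneg hR0]
    intro x
    have h := hmemIcc μ hμ s₀ x
    rw [Real.norm_eq_abs, abs_le]
    exact ⟨by linarith [h.1], h.2⟩
  set K := closure 𝒟 with hKdef
  have hKcomp : IsCompact K := hDbdd.isCompact_closure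
  have hKconv : Convex ℝ K := h𝒟conv.closure
  have hDK : 𝒟 ⊆ K := subset_closure
  have hKne : K.Nonempty := ⟨μtil, hDK hμtil.1⟩
  -- the bilinear part
  set w : (S → S × A → ℝ) → S × A → ℝ :=
    fun μ x => ∑ s₀, (p₀ s₀).toReal * (μ s₀ x - muS P πE γ η s₀ x) with hwdef
  set F : (S → S × A → ℝ) → (S × A → ℝ) → ℝ :=
    fun μ c => -Ωb μ + ∑ x, c x * w μ x with hFdef
  have hLF : ∀ μ c, Lbar μ c = F μ c - ψ c := by
    intro μ c
    rw [hL]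
    simp only [hFdef, hwdef]
    have hswap : ∑ s₀ : S, (p₀ s₀).toReal * ∑ x : S × A, c x * (μ s₀ x - muS P πE γ η s₀ x)
        = ∑ x : S × A, c x * ∑ s₀ : S, (p₀ s₀).toReal * (μ s₀ x - muS P πE γ η s₀ x) := by
      simp_rw [Finset.mul_sum]
      rw [Finset.sum_comm]
      exact Finset.sum_congr rfl fun x _ => Finset.sum_congr rfl fun s₀ _ => by ring
    rw [hswap]; ring
  -- F is affine in c
  have hFc : ∀ μ (a b : ℝ), a + b = 1 → ∀ c₁ c₂,
      F μ (a • c₁ + b • c₂) = a * F μ c₁ + b * F μ c₂ := by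
    intro μ a b hab c₁ c₂
    simp only [hFdef]
    have h1 : ∑ x, (a • c₁ + b • c₂) x * w μ x
        = a * ∑ x, c₁ x * w μ x + b * ∑ x, c₂ x * w μ x := by
      rw [Finset.mul_sum, Finset.mul_sum, ← Finset.sum_add_distrib]
      refine Finset.sum_congr rfl fun x _ => ?_
      simp only [Pi.add_apply, Pi.smul_apply, smul_eq_mul]
      ring
    rw [h1]
    linear_combination (Ωb μ) * hab
  -- w is affine in μ
  have hwlin : ∀ (a b : ℝ), a + b = 1 → ∀ μ ν x,
      w (a • μ + b • ν) x = a * w μ x + b * w ν x := by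
    intro a b hab μ ν x
    simp only [hwdef]
    rw [Finset.mul_sum, Finset.mul_sum, ← Finset.sum_add_distrib]
    refine Finset.sum_congr rfl fun s₀ _ => ?_
    simp only [Pi.add_apply, Pi.smul_apply, smul_eq_mul]
    linear_combination ((p₀ s₀).toReal * muS P πE γ η s₀ x) * hab
  have hsumlin : ∀ (c : S × A → ℝ) (a b : ℝ), a + b = 1 → ∀ μ ν,
      ∑ x, c x * w (a • μ + b • ν) x
        = a * ∑ x, c x * w μ x + b * ∑ x, c x * w ν x := by
    intro c a b hab μ ν
    rw [Finset.mul_sum, Finset.mul_sum, ← Finset.sum_add_distrib]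
    refine Finset.sum_congr rfl fun x _ => ?_
    rw [hwlin a b hab μ ν x]; ring
  -- strict convexity of F (·, c) on K
  have hstrict : ∀ c : S × A → ℝ, StrictConvexOn ℝ K (fun μ => F μ c) := by
    intro c
    refine ⟨hKconv, ?_⟩
    intro μ hμ ν hν hne a b ha hb hab
    simp only [hFdef, smul_eq_mul]
    have h1 := hΩ.2 (Set.mem_univ μ) (Set.mem_univ ν) hne ha hb hab
    simp only [smul_eq_mul] at h1
    have h2 := hsumlin c a b hab μ ν
    linarith
  -- continuity
  have hΩcont : Continuous Ωb := by
    rw [← continuousOn_univ]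
    exact (hΩ.concaveOn).continuousOn isOpen_univ
  have hFcont : ∀ c : S × A → ℝ, Continuous fun μ => F μ c := by
    intro c
    simp only [hFdef]
    refine (hΩcont.neg).add ?_
    refine continuous_finset_sum _ fun x _ => Continuous.mul continuous_const ?_
    simp only [hwdef]
    refine continuous_finset_sum _ fun s₀ _ => Continuous.mul continuous_const ?_
    exact ((continuous_apply x).comp (continuous_apply (A := fun _ : S => S × A → ℝ) s₀)).sub continuous_const
  -- μtil minimizes F(·, ctil) over K
  have hμtilK : ∀ μ ∈ K, F μtil ctil ≤ F μ ctil := by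
    have hclosed : IsClosed {μ : S → S × A → ℝ | F μtil ctil ≤ F μ ctil} :=
      isClosed_le continuous_const (hFcont ctil)
    have hsub : 𝒟 ⊆ {μ : S → S × A → ℝ | F μtil ctil ≤ F μ ctil} := by
      intro μ hμ
      have h := hμtil.2 μ hμ
      rw [hLF, hLF] at h
      simp only [Set.mem_setOf_eq]
      linarith
    exact fun μ hμ => closure_minimal hsub hclosed hμ
  -- value of the inner infimum at ctil
  have hiInf_ctil : (⨅ μ : 𝒟, Lbar (↑μ) ctil) = Lbar μtil ctil := by
    apply le_antisymm
    · refine ciInf_le ⟨Lbar μtil ctil, ?_⟩ (⟨μtil, hμtil.1⟩ : 𝒟)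
      rintro y ⟨μ, rfl⟩
      exact hμtil.2 μ μ.2
    · exact le_ciInf fun μ => hμtil.2 μ μ.2
  -- uniqueness of minimizers of F(·, ctil) on K
  have huniq : ∀ x y : S → S × A → ℝ, x ∈ K → y ∈ K →
      (∀ z ∈ K, F x ctil ≤ F z ctil) → (∀ z ∈ K, F y ctil ≤ F z ctil) → x = y := by
    intro x y hx hy hxm hym
    by_contra hne
    have hmid := (hstrict ctil).2 hx hy hne one_half_pos one_half_pos (by norm_num)
    have hmK : (1/2 : ℝ) • x + (1/2 : ℝ) • y ∈ K :=
      hKconv hx hy (by norm_num) (by norm_num) (by norm_num)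
    have h1 := hxm _ hmK
    have h2 : F x ctil = F y ctil := le_antisymm (hxm y hy) (hym x hx)
    have h3 := h1.trans_lt hmid
    simp only [smul_eq_mul] at h3
    rw [← h2] at h3
    linarith
  -- KEY: ctil maximizes c ↦ Lbar μtil c
  have key : ∀ c : S × A → ℝ, Lbar μtil c ≤ Lbar μtil ctil := by
    intro c
    set t : ℕ → ℝ := fun n => 1 / (n + 1) with htdef
    have ht0 : ∀ n, 0 < t n := fun n => by positivity
    have ht1 : ∀ n, t n ≤ 1 := fun n => by
      rw [htdef]
      simp only
      rw [div_le_one (by positivity)]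
      exact le_add_of_nonneg_left (Nat.cast_nonneg n)
    set cc : ℕ → (S × A → ℝ) := fun n => (1 - t n) • ctil + t n • c with hccdef
    -- minimizers over K at cc n
    have hmin : ∀ n : ℕ, ∃ ν ∈ K, ∀ μ ∈ K, F ν (cc n) ≤ F μ (cc n) := by
      intro n
      obtain ⟨ν, hνK, hνmin⟩ := hKcomp.exists_isMinOn hKne ((hFcont (cc n)).continuousOn)
      exact ⟨ν, hνK, fun μ hμ => hνmin hμ⟩
    choose ν hνK hνmin using hmin
    -- the main chain of inequalities
    have hchain : ∀ n : ℕ,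
        (1 - t n) * F (ν n) ctil + t n * F (ν n) c
          ≤ F μtil ctil + t n * (ψ c - ψ ctil) := by
      intro n
      have hIa : F (ν n) (cc n) - ψ (cc n) ≤ ⨅ μ : 𝒟, Lbar (↑μ) (cc n) := by
        refine le_ciInf fun μ => ?_
        rw [hLF]
        have h := hνmin n μ (hDK μ.2)
        linarith
      have hIb := hctil (cc n)
      have hIc : ψ (cc n) ≤ (1 - t n) * ψ ctil + t n * ψ c := by
        have h := hψ.2 (Set.mem_univ ctil) (Set.mem_univ c)
          (show (0:ℝ) ≤ 1 - t n by linarith [ht1 n]) (ht0 n).le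
          (show (1 - t n) + t n = 1 by ring)
        simpa only [smul_eq_mul] using h
      have heqF : F (ν n) (cc n) = (1 - t n) * F (ν n) ctil + t n * F (ν n) c :=
        hFc (ν n) (1 - t n) (t n) (by ring) ctil c
      have hIab := hIa.trans hIb
      rw [hiInf_ctil, hLF μtil ctil, heqF] at hIab
      linarith
    have hstar : ∀ n : ℕ, F (ν n) c ≤ F μtil ctil + (ψ c - ψ ctil) := by
      intro n
      have h1 := hμtilK (ν n) (hνK n)
      have h2 := hchain n
      have h4 := mul_le_mul_of_nonneg_left h1 (show (0:ℝ) ≤ 1 - t n by linarith [ht1 n])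
      have h3 : t n * F (ν n) c ≤ t n * (F μtil ctil + (ψ c - ψ ctil)) := by linarith
      exact le_of_mul_le_mul_left h3 (ht0 n)
    -- pass to the limit along a convergent subsequence
    obtain ⟨ν', hν'K, φ, hφ, hφtendsto⟩ := hKcomp.tendsto_subseq (fun n => hνK n)
    have htt : Tendsto t atTop (𝓝 0) := tendsto_one_div_add_atTop_nhds_zero_nat
    have htφ : Tendsto (fun n => t (φ n)) atTop (𝓝 0) := htt.comp hφ.tendsto_atTop
    have hc1 : Tendsto (fun n => F (ν (φ n)) ctil) atTop (𝓝 (F ν' ctil)) :=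
      ((hFcont ctil).tendsto ν').comp hφtendsto
    have hc2 : Tendsto (fun n => F (ν (φ n)) c) atTop (𝓝 (F ν' c)) :=
      ((hFcont c).tendsto ν').comp hφtendsto
    -- ν' minimizes F(·, ctil) over K
    have hlhs : Tendsto (fun n => (1 - t (φ n)) * F (ν (φ n)) ctil + t (φ n) * F (ν (φ n)) c)
        atTop (𝓝 ((1 - 0) * F ν' ctil + 0 * F ν' c)) :=
      ((tendsto_const_nhds.sub htφ).mul hc1).add (htφ.mul hc2)
    have hrhs : Tendsto (fun n => F μtil ctil + t (φ n) * (ψ c - ψ ctil))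
        atTop (𝓝 (F μtil ctil + 0 * (ψ c - ψ ctil))) :=
      tendsto_const_nhds.add (htφ.mul tendsto_const_nhds)
    have hν'le : F ν' ctil ≤ F μtil ctil := by
      have h := le_of_tendsto_of_tendsto' hlhs hrhs fun n => hchain (φ n)
      simpa using h
    have hν'min : ∀ μ ∈ K, F ν' ctil ≤ F μ ctil := fun μ hμ => hν'le.trans (hμtilK μ hμ)
    have hν'eq : ν' = μtil := huniq ν' μtil hν'K (hDK hμtil.1) hν'min hμtilK
    have hfinal : F ν' c ≤ F μtil ctil + (ψ c - ψ ctil) :=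
      le_of_tendsto hc2 (Filter.Eventually.of_forall fun n => hstar (φ n))
    rw [hν'eq] at hfinal
    rw [hLF, hLF]
    linarith
  -- finish: compare suprema
  have e3 : (⨆ c : S × A → ℝ, Lbar μtil c) = Lbar μtil ctil := by
    apply le_antisymm
    · exact ciSup_le key
    · refine le_ciSup ⟨Lbar μtil ctil, ?_⟩ ctil
      rintro y ⟨c, rfl⟩
      exact key c
  have e1 : Lbar μhat ctil ≤ ⨆ c : S × A → ℝ, Lbar μhat c := le_ciSup hbdd ctil
  have e2 : (⨆ c : S × A → ℝ, Lbar μhat c) ≤ ⨆ c : S × A → ℝ, Lbar μtil c :=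
    hμhat.2 μtil hμtil.1
  have e4 : Lbar μtil ctil ≤ Lbar μhat ctil := hμtil.2 μhat hμhat.1
  have heq : Lbar μhat ctil = Lbar μtil ctil := le_antisymm (by linarith) e4
  have hμhatK : ∀ μ ∈ K, F μhat ctil ≤ F μ ctil := by
    intro μ hμ
    have h := hμtilK μ hμ
    have h2 : F μhat ctil = F μtil ctil := by
      have := hLF μhat ctil
      have := hLF μtil ctil
      linarith
    linarith
  exact huniq μtil μhat (hDK hμtil.1) (hDK hμhat.1) hμtilK hμhatK
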